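/- The autonomous domination number of a graph is bounded above by n − δ, where n is the order of the graph and δ is its minimum degree. -/

import Mathlib

open SimpleGraph

variable {V : Type*} [DecidableEq V]

/-- `S` is a dominating set of `G`. -/
def Dominates (G : SimpleGraph V) (S : Finset V) : Prop :=
  ∀ v : V, v ∈ S ∨ ∃ u ∈ S, G.Adj u v

/-- Dominating sets `S` and `S'` are adjacent: they differ by moving one
guard along an edge of `G`. -/
def AdjacentSets (G : SimpleGraph V) (S S' : Finset V) : Prop :=
  ∃ v v', v ∈ S ∧ v' ∉ S ∧ G.Adj v v' ∧ S' = insert v' (S.erase v)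

/-- `S` is a secure dominating set. -/
def SecureDominating (G : SimpleGraph V) (S : Finset V) : Prop :=
  Dominates G S ∧ ∀ v ∉ S, ∃ S', Dominates G S' ∧ AdjacentSets G S S' ∧ v ∈ S'

/-- An autonomously dominating family. -/
def AutFamily (G : SimpleGraph V) (F : Set (Finset V)) : Prop :=
  (∀ S ∈ F, Dominates G S) ∧
  (∀ S ∈ F, ∀ v ∉ S, ∃ S' ∈ F, AdjacentSets G S S' ∧ v ∈ S') ∧
  (∀ S ∈ F, ∀ S', Dominates G S' → AdjacentSets G S S' → S' ∈ F)

/-- An autonomously dominating set. -/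
def AutDomSet (G : SimpleGraph V) (S : Finset V) : Prop :=
  ∃ F, AutFamily G F ∧ S ∈ F

/-- The autonomous domination number. -/
noncomputable def autDomNum (G : SimpleGraph V) : ℕ :=
  sInf {k | ∃ S : Finset V, AutDomSet G S ∧ S.card = k}

/-- An eternally dominating family (no closure condition). -/
def EternalFamily (G : SimpleGraph V) (F : Set (Finset V)) : Prop :=
  (∀ S ∈ F, Dominates G S) ∧
  (∀ S ∈ F, ∀ v ∉ S, ∃ S' ∈ F, AdjacentSets G S S' ∧ v ∈ S')

/-- The eternal domination number. -/
noncomputable def eternalDomNum (G : SimpleGraph V) : ℕ :=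
  sInf {k | ∃ (F : Set (Finset V)) (S : Finset V),
    EternalFamily G F ∧ S ∈ F ∧ S.card = k}

/-- The domination number. -/
noncomputable def domNum (G : SimpleGraph V) : ℕ :=
  sInf {k | ∃ S : Finset V, Dominates G S ∧ S.card = k}

/-- `γ_aut(G) ≤ n - δ`. -/
lemma dom_of_card_ge {V : Type*} [DecidableEq V] [Fintype V]
    (G : SimpleGraph V) [DecidableRel G.Adj] (S : Finset V)
    (h : Fintype.card V - G.minDegree ≤ S.card) : Dominates G S := by
  intro v
  by_cases hv : v ∈ S
  · exact Or.inl hv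
  · right
    by_contra hno
    push_neg at hno
    have hsub : G.neighborFinset v ⊆ (Sᶜ).erase v := by
      intro u hu
      rw [SimpleGraph.mem_neighborFinset] at hu
      refine Finset.mem_erase.2 ⟨fun h' => G.irrefl (h' ▸ hu), ?_⟩
      simp only [Finset.mem_compl]
      exact fun hu' => hno u hu' hu.symm
    have h1 : G.minDegree ≤ (G.neighborFinset v).card := by
      rw [SimpleGraph.card_neighborFinset_eq_degree]
      exact G.minDegree_le_degree v
    have h2 := Finset.card_le_card hsub
    have h3 : ((Sᶜ : Finset V)).card = Fintype.card V - S.card := by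
      simp [Finset.card_compl]
    have hvS : v ∈ (Sᶜ : Finset V) := Finset.mem_compl.2 hv
    have h4 : ((Sᶜ : Finset V).erase v).card = (Sᶜ : Finset V).card - 1 :=
      Finset.card_erase_of_mem hvS
    have hδn : G.minDegree ≤ Fintype.card V :=
      (G.minDegree_le_degree v).trans (by
        rw [← SimpleGraph.card_neighborFinset_eq_degree]; exact Finset.card_le_univ _)
    have hScompl : (Sᶜ : Finset V).card ≤ G.minDegree := by
      rw [h3]
      omega
    have hpos : 1 ≤ (Sᶜ : Finset V).card := Finset.card_pos.2 ⟨v, hvS⟩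
    omega

lemma card_eq_of_adjacentSets {V : Type*} [DecidableEq V] (G : SimpleGraph V)
    {S S' : Finset V} (h : AdjacentSets G S S') : S'.card = S.card := by
  obtain ⟨v, v', hv, hv', _, rfl⟩ := h
  rw [Finset.card_insert_of_notMem (fun h => hv' (Finset.mem_of_mem_erase h)),
    Finset.card_erase_of_mem hv]
  have : 1 ≤ S.card := Finset.card_pos.2 ⟨v, hv⟩
  omega

theorem autDomNum_le_card_sub_minDegree {V : Type*} [DecidableEq V] [Fintype V] [Nonempty V]
    (G : SimpleGraph V) [DecidableRel G.Adj] :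
    autDomNum G ≤ Fintype.card V - G.minDegree := by
  set k := Fintype.card V - G.minDegree with hk
  have hkn : k ≤ Fintype.card V := Nat.sub_le _ _
  obtain ⟨S, -, hcard⟩ := Finset.exists_subset_card_eq (s := (Finset.univ : Finset V)) (n := k)
    (by simpa using hkn)
  have hfam : AutFamily G {T : Finset V | T.card = k} := by
    refine ⟨fun T hT => dom_of_card_ge G T (le_of_eq hT.symm), ?_, ?_⟩
    · intro T hT v hv
      have hdom := dom_of_card_ge G T (le_of_eq (Set.mem_setOf_eq ▸ hT).symm)
      obtain hv' | ⟨u, hu, hadj⟩ := hdom v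
      · exact absurd hv' hv
      · refine ⟨insert v (T.erase u), ?_, ⟨u, v, hu, hv, hadj, rfl⟩, Finset.mem_insert_self _ _⟩
        have : (insert v (T.erase u)).card = T.card :=
          card_eq_of_adjacentSets G ⟨u, v, hu, hv, hadj, rfl⟩
        simpa [this] using hT
    · intro T hT T' _ hadj
      have := card_eq_of_adjacentSets G hadj
      simpa [this] using hT
  apply Nat.sInf_le
  exact ⟨S, ⟨{T : Finset V | T.card = k}, hfam, hcard⟩, hcard⟩
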